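/- (Lossless generalized Kronecker decomposition.) Let m₁, m₂, n₁, n₂ : ℕ and let R = min (m₁ * n₁) (m₂ * n₂). Every real matrix G indexed by (Fin m₁ × Fin m₂) × (Fin n₁ × Fin n₂) can be written exactly (losslessly) as a sum of R Kronecker products: there exist matrices B_r : Matrix (Fin m₁) (Fin n₁) ℝ and C_r : Matrix (Fin m₂) (Fin n₂) ℝ for r = 1,…,R such that G = Σ_{r=1}^{R} B_r ⊗ C_r. -/

import Mathlib

open Matrix

/-- Lossless generalized Kronecker decomposition: every real matrix indexed by
`(Fin m₁ × Fin m₂) × (Fin n₁ × Fin n₂)` is exactly a sum of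
`min (m₁ * n₁) (m₂ * n₂)` Kronecker products. -/
theorem lossless_gkd (m₁ m₂ n₁ n₂ : ℕ)
    (G : Matrix (Fin m₁ × Fin m₂) (Fin n₁ × Fin n₂) ℝ) :
    ∃ (B : Fin (min (m₁ * n₁) (m₂ * n₂)) → Matrix (Fin m₁) (Fin n₁) ℝ)
      (C : Fin (min (m₁ * n₁) (m₂ * n₂)) → Matrix (Fin m₂) (Fin n₂) ℝ),
      G = ∑ r, Matrix.kroneckerMap (· * ·) (B r) (C r) := by
  rcases le_total (m₁ * n₁) (m₂ * n₂) with h | h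
  · have e : Fin (min (m₁ * n₁) (m₂ * n₂)) ≃ Fin m₁ × Fin n₁ :=
      (finCongr (min_eq_left h)).trans finProdFinEquiv.symm
    refine ⟨fun r => Matrix.single (e r).1 (e r).2 1,
      fun r => fun i j => G ((e r).1, i) ((e r).2, j), ?_⟩
    ext ⟨i₁, i₂⟩ ⟨j₁, j₂⟩
    rw [Matrix.sum_apply]
    simp only [kroneckerMap, Matrix.of_apply]
    rw [Fintype.sum_equiv e
        (fun r => Matrix.single (e r).1 (e r).2 (1:ℝ) i₁ j₁ * G ((e r).1, i₂) ((e r).2, j₂))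
        (fun p => Matrix.single p.1 p.2 (1:ℝ) i₁ j₁ * G (p.1, i₂) (p.2, j₂)) (fun r => rfl)]
    simp [Fintype.sum_prod_type, Matrix.single, ite_and, kroneckerMap]
  · have e : Fin (min (m₁ * n₁) (m₂ * n₂)) ≃ Fin m₂ × Fin n₂ :=
      (finCongr (min_eq_right h)).trans finProdFinEquiv.symm
    refine ⟨fun r => fun i j => G (i, (e r).1) (j, (e r).2),
      fun r => Matrix.single (e r).1 (e r).2 1, ?_⟩
    ext ⟨i₁, i₂⟩ ⟨j₁, j₂⟩
    rw [Matrix.sum_apply]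
    simp only [kroneckerMap, Matrix.of_apply]
    rw [Fintype.sum_equiv e
        (fun r => G (i₁, (e r).1) (j₁, (e r).2) * Matrix.single (e r).1 (e r).2 (1:ℝ) i₂ j₂)
        (fun p => G (i₁, p.1) (j₁, p.2) * Matrix.single p.1 p.2 (1:ℝ) i₂ j₂) (fun r => rfl)]
    simp [Fintype.sum_prod_type, Matrix.single, ite_and, kroneckerMap]
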